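/- For every n ≥ 1 and every integer m with 0 ≤ m ≤ 2^{n−1}, the m-section width of the set of symbol nodes of the n-polar decoding graph P_n is at least 2m; that is, every partition of the vertices of P_n into two parts such that one part contains exactly m symbol nodes has at least 2m edges joining the two parts. -/

import Mathlib

/-- Vertex type of the polar decoding graph `P_{k+1}`.  `PV 0` is the vertex type of
`P_1` (two symbol nodes and two right-hand nodes), and the vertices of `P_{k+2}` are
`2^(k+2)` new symbol nodes together with two disjoint copies of the vertices of
`P_{k+1}`. -/
def PV : ℕ → Type
  | 0 => Fin 2 ⊕ Fin 2
  | k + 1 => Fin (2 ^ (k + 2)) ⊕ (PV k ⊕ PV k)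

/-- The `i`-th symbol node of `P_{k+1}` (there are `2^(k+1)` of them). -/
def sym : (k : ℕ) → Fin (2 ^ (k + 1)) → PV k
  | 0, i => Sum.inl i
  | _ + 1, i => Sum.inl i

/-- The polar decoding graph `P_{k+1}` on vertex type `PV k`.  `P_1` is the complete
bipartite graph `K_{2,2}` whose two left vertices are its symbol nodes.  `P_{k+2}`
consists of `2^(k+2)` symbol nodes together with two copies of `P_{k+1}`; the symbol
nodes `a_{2i}` and `a_{2i+1}` (0-indexed) are joined to the `i`-th symbol node of each
copy, giving the `i`-th bowtie. -/
def PG : (k : ℕ) → SimpleGraph (PV k)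
  | 0 => SimpleGraph.fromRel (fun u v => u.isLeft ∧ v.isRight)
  | k + 1 =>
    SimpleGraph.fromRel (fun u v =>
      match u, v with
      | Sum.inl j, Sum.inr w =>
          ∃ i : Fin (2 ^ (k + 1)), (j : ℕ) / 2 = (i : ℕ) ∧
            (w = Sum.inl (sym k i) ∨ w = Sum.inr (sym k i))
      | Sum.inr (Sum.inl a), Sum.inr (Sum.inl b) => (PG k).Adj a b
      | Sum.inr (Sum.inr a), Sum.inr (Sum.inr b) => (PG k).Adj a b
      | _, _ => False)

/-- The width of the partition `(A, Aᶜ)` of the vertices of `G`: the number of edges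
of `G` with one endpoint in `A` and the other outside `A`. -/
noncomputable def partWidth {V : Type} (G : SimpleGraph V) (A : Set V) : ℕ :=
  {p : V × V | p.1 ∈ A ∧ p.2 ∉ A ∧ G.Adj p.1 p.2}.ncard


instance pvFinite : ∀ k, Finite (PV k)
  | 0 => by show Finite (Fin 2 ⊕ Fin 2); infer_instance
  | k + 1 => by
      show Finite (Fin (2 ^ (k + 2)) ⊕ (PV k ⊕ PV k))
      have := pvFinite k; infer_instance

lemma sym_inj (k : ℕ) : Function.Injective (sym k) := by
  cases k with
  | zero =>
      intro a b h
      exact Sum.inl_injective (show (Sum.inl a : Fin 2 ⊕ Fin 2) = Sum.inl b from h)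
  | succ k =>
      intro a b h
      exact Sum.inl_injective
        (show (Sum.inl a : Fin (2 ^ (k + 2)) ⊕ (PV k ⊕ PV k)) = Sum.inl b from h)

lemma adj_bb (k : ℕ) (a b : PV k) :
    (PG (k+1)).Adj (Sum.inr (Sum.inl a)) (Sum.inr (Sum.inl b)) ↔ (PG k).Adj a b := by
  simp only [PG, SimpleGraph.fromRel_adj, ne_eq, Sum.inr.injEq, Sum.inl.injEq]
  constructor
  · rintro ⟨hne, h | h⟩
    · exact h
    · exact h.symm
  · intro h
    exact ⟨fun e => h.ne (Sum.inl_injective (Sum.inr_injective e)), Or.inl h⟩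

lemma adj_cc (k : ℕ) (a b : PV k) :
    (PG (k+1)).Adj (Sum.inr (Sum.inr a)) (Sum.inr (Sum.inr b)) ↔ (PG k).Adj a b := by
  simp only [PG, SimpleGraph.fromRel_adj, ne_eq, Sum.inr.injEq]
  constructor
  · rintro ⟨hne, h | h⟩
    · exact h
    · exact h.symm
  · intro h
    exact ⟨fun e => h.ne (Sum.inr_injective (Sum.inr_injective e)), Or.inl h⟩

lemma half_lt (k : ℕ) (j : Fin (2 ^ (k + 2))) : (j : ℕ) / 2 < 2 ^ (k + 1) := by
  have h1 := j.isLt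
  have h2 : 2 ^ (k + 2) = 2 ^ (k + 1) * 2 := pow_succ 2 (k+1)
  omega

lemma adj_ab (k : ℕ) (j : Fin (2 ^ (k + 2))) :
    (PG (k+1)).Adj (Sum.inl j) (Sum.inr (Sum.inl (sym k ⟨(j : ℕ) / 2, half_lt k j⟩))) := by
  rw [PG]
  erw [SimpleGraph.fromRel_adj]
  refine ⟨fun h => (nomatch h), Or.inl ?_⟩
  exact ⟨⟨(j : ℕ) / 2, half_lt k j⟩, rfl, Or.inl rfl⟩

lemma adj_ac (k : ℕ) (j : Fin (2 ^ (k + 2))) :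
    (PG (k+1)).Adj (Sum.inl j) (Sum.inr (Sum.inr (sym k ⟨(j : ℕ) / 2, half_lt k j⟩))) := by
  rw [PG]
  erw [SimpleGraph.fromRel_adj]
  refine ⟨fun h => (nomatch h), Or.inl ?_⟩
  exact ⟨⟨(j : ℕ) / 2, half_lt k j⟩, rfl, Or.inr rfl⟩


open Classical in
noncomputable def ind (P : Prop) : ℕ := if P then 1 else 0

lemma ind_le_one (P : Prop) : ind P ≤ 1 := by
  by_cases h : P <;> simp [ind, h]

open Classical in
lemma bowtie1 (P1 P2 Q : Prop) :
    ind P1 + ind P2 ≤ (ind (¬(P1 ↔ Q)) + ind (¬(P2 ↔ Q))) + 2 * ind Q := by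
  by_cases h1 : P1 <;> by_cases h2 : P2 <;> by_cases h3 : Q <;>
    simp [ind, h1, h2, h3]

open Classical in
lemma bowtie2 (P1 P2 Q : Prop) :
    2 * ind Q ≤ (ind (¬(P1 ↔ Q)) + ind (¬(P2 ↔ Q))) + (ind P1 + ind P2) := by
  by_cases h1 : P1 <;> by_cases h2 : P2 <;> by_cases h3 : Q <;>
    simp [ind, h1, h2, h3]

def extend (n : ℕ) (f : Fin n → ℕ) (j : ℕ) : ℕ := if h : j < n then f ⟨j, h⟩ else 0

lemma sum_extend (n : ℕ) (f : Fin n → ℕ) :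
    ∑ i : Fin n, f i = ∑ j ∈ Finset.range n, extend n f j := by
  rw [← Fin.sum_univ_eq_sum_range (extend n f) n]
  exact Finset.sum_congr rfl fun i _ => by simp [extend]

lemma sum_doubling (N : ℕ) (f : ℕ → ℕ) :
    ∑ j ∈ Finset.range (2 * N), f j = ∑ i ∈ Finset.range N, (f (2 * i) + f (2 * i + 1)) := by
  induction N with
  | zero => simp
  | succ n ih =>
      rw [Finset.sum_range_succ, ← ih, Nat.mul_succ, Finset.sum_range_succ,
        Finset.sum_range_succ]
      ring

lemma side_bound_core (N cut : ℕ) (fa fx g : ℕ → ℕ)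
    (hK1 : ∀ i < N, fa (2*i) + fa (2*i+1) ≤ (fx (2*i) + fx (2*i+1)) + 2 * g i)
    (hK2 : ∀ i < N, 2 * g i ≤ (fx (2*i) + fx (2*i+1)) + (fa (2*i) + fa (2*i+1)))
    (hg : ∀ i < N, g i ≤ 1)
    (hm : ∑ j ∈ Finset.range (2*N), fa j ≤ N)
    (hcut : 2 * min (∑ i ∈ Finset.range N, g i) (N - ∑ i ∈ Finset.range N, g i) ≤ cut) :
    ∑ j ∈ Finset.range (2*N), fa j ≤ (∑ j ∈ Finset.range (2*N), fx j) + cut := by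
  rw [sum_doubling] at hm ⊢
  rw [sum_doubling N fx]
  have hq : ∑ i ∈ Finset.range N, g i ≤ N := by
    calc ∑ i ∈ Finset.range N, g i ≤ ∑ i ∈ Finset.range N, 1 :=
          Finset.sum_le_sum (fun i hi => hg i (Finset.mem_range.mp hi))
      _ = N := by simp
  have h1 : ∑ i ∈ Finset.range N, (fa (2*i) + fa (2*i+1)) ≤
      (∑ i ∈ Finset.range N, (fx (2*i) + fx (2*i+1))) + 2 * ∑ i ∈ Finset.range N, g i := by
    rw [Finset.mul_sum, ← Finset.sum_add_distrib]
    exact Finset.sum_le_sum (fun i hi => hK1 i (Finset.mem_range.mp hi))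
  have h2 : 2 * ∑ i ∈ Finset.range N, g i ≤
      (∑ i ∈ Finset.range N, (fx (2*i) + fx (2*i+1))) +
        ∑ i ∈ Finset.range N, (fa (2*i) + fa (2*i+1)) := by
    rw [Finset.mul_sum, ← Finset.sum_add_distrib]
    exact Finset.sum_le_sum (fun i hi => hK2 i (Finset.mem_range.mp hi))
  omega


open Classical in
lemma partWidth_compl {V : Type} (G : SimpleGraph V) (A : Set V) :
    partWidth G Aᶜ = partWidth G A := by
  unfold partWidth
  have himg : {p : V × V | p.1 ∈ Aᶜ ∧ p.2 ∉ Aᶜ ∧ G.Adj p.1 p.2}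
      = Prod.swap '' {p : V × V | p.1 ∈ A ∧ p.2 ∉ A ∧ G.Adj p.1 p.2} := by
    ext ⟨u, v⟩
    simp only [Set.mem_setOf_eq, Set.mem_image, Prod.exists, Prod.swap_prod_mk,
      Prod.mk.injEq]
    constructor
    · rintro ⟨hu, hv, hadj⟩
      exact ⟨v, u, ⟨not_not.mp (by simpa using hv), by simpa using hu, hadj.symm⟩, rfl, rfl⟩
    · rintro ⟨a, b, ⟨ha, hb, hadj⟩, rfl, rfl⟩
      exact ⟨by simpa using hb, by simpa using ha, hadj.symm⟩
  rw [himg, Set.ncard_image_of_injective _ Prod.swap_injective]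

def half (k : ℕ) (j : Fin (2 ^ (k + 2))) : Fin (2 ^ (k + 1)) := ⟨(j : ℕ) / 2, half_lt k j⟩

lemma adj_ab' (k : ℕ) (j : Fin (2 ^ (k + 2))) :
    (PG (k+1)).Adj (Sum.inl j) (Sum.inr (Sum.inl (sym k (half k j)))) := adj_ab k j

lemma adj_ac' (k : ℕ) (j : Fin (2 ^ (k + 2))) :
    (PG (k+1)).Adj (Sum.inl j) (Sum.inr (Sum.inr (sym k (half k j)))) := adj_ac k j

open Classical in
lemma ncard_setOf_fin {n : ℕ} (P : Fin n → Prop) :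
    {i | P i}.ncard = ∑ i : Fin n, ind (P i) := by
  classical
  rw [show {i | P i} = ↑(Finset.univ.filter P) from by ext i; simp,
    Set.ncard_coe_finset, Finset.card_filter]
  refine Finset.sum_congr rfl fun i _ => ?_
  by_cases h : P i <;> simp [ind, h]

lemma ncard_symbols (k : ℕ) (A : Set (PV k)) :
    (A ∩ Set.range (sym k)).ncard = ∑ i : Fin (2 ^ (k + 1)), ind (sym k i ∈ A) := by
  have himg : A ∩ Set.range (sym k) = sym k '' {i | sym k i ∈ A} := by
    ext v
    constructor
    · rintro ⟨hv, i, rfl⟩; exact ⟨i, hv, rfl⟩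
    · rintro ⟨i, hi, rfl⟩; exact ⟨hi, i, rfl⟩
  rw [himg, Set.ncard_image_of_injective _ (sym_inj k), ncard_setOf_fin]

lemma ncard_range_sym (k : ℕ) : (Set.range (sym k)).ncard = 2 ^ (k + 1) := by
  rw [← Set.image_univ, Set.ncard_image_of_injective _ (sym_inj k), Set.ncard_univ,
    Nat.card_eq_fintype_card, Fintype.card_fin]

lemma symbols_le (k : ℕ) (A : Set (PV k)) :
    (A ∩ Set.range (sym k)).ncard ≤ 2 ^ (k + 1) := by
  calc (A ∩ Set.range (sym k)).ncard ≤ (Set.range (sym k)).ncard :=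
        Set.ncard_le_ncard Set.inter_subset_right (Set.toFinite _)
    _ = 2 ^ (k + 1) := ncard_range_sym k

lemma ncard_compl_symbols (k : ℕ) (B : Set (PV k)) :
    (Bᶜ ∩ Set.range (sym k)).ncard = 2 ^ (k + 1) - (B ∩ Set.range (sym k)).ncard := by
  have h : Bᶜ ∩ Set.range (sym k) = Set.range (sym k) \ (B ∩ Set.range (sym k)) := by
    ext v; simp only [Set.mem_inter_iff, Set.mem_compl_iff, Set.mem_diff]; tauto
  rw [h, Set.ncard_diff Set.inter_subset_right, ncard_range_sym]

open Classical in
lemma side_bound (k cut : ℕ) (P : Fin (2 ^ (k + 2)) → Prop) (Q : Fin (2 ^ (k + 1)) → Prop)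
    (hm : (∑ j : Fin (2 ^ (k + 2)), ind (P j)) ≤ 2 ^ (k + 1))
    (hcut : 2 * min (∑ i : Fin (2 ^ (k + 1)), ind (Q i))
        (2 ^ (k + 1) - ∑ i : Fin (2 ^ (k + 1)), ind (Q i)) ≤ cut) :
    (∑ j : Fin (2 ^ (k + 2)), ind (P j)) ≤
      (∑ j : Fin (2 ^ (k + 2)), ind (¬(P j ↔ Q (half k j)))) + cut := by
  have h2 : 2 ^ (k + 2) = 2 * 2 ^ (k + 1) := by ring
  rw [sum_extend] at hm ⊢
  rw [sum_extend (2 ^ (k+2)) (fun j => ind (¬(P j ↔ Q (half k j))))]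
  rw [sum_extend] at hcut
  rw [show (Finset.range (2 ^ (k+2))) = Finset.range (2 * 2 ^ (k + 1)) from by rw [h2]] at hm ⊢
  refine side_bound_core (2 ^ (k + 1)) cut _ _ (extend (2 ^ (k + 1)) (fun i => ind (Q i)))
    ?_ ?_ ?_ hm hcut
  · intro i hi
    have e1 : 2 * i < 2 ^ (k + 2) := by omega
    have e2 : 2 * i + 1 < 2 ^ (k + 2) := by omega
    have d1 : (2 * i) / 2 = i := by omega
    have d2 : (2 * i + 1) / 2 = i := by omega
    simp only [extend, dif_pos e1, dif_pos e2, dif_pos hi, half]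
    have hf1 : (⟨(((⟨2 * i, e1⟩ : Fin (2 ^ (k+2))) : ℕ)) / 2, half_lt k _⟩ : Fin (2 ^ (k + 1))) = ⟨i, hi⟩ := by
      apply Fin.ext; simpa using d1
    have hf2 : (⟨(((⟨2 * i + 1, e2⟩ : Fin (2 ^ (k+2))) : ℕ)) / 2, half_lt k _⟩ : Fin (2 ^ (k + 1))) = ⟨i, hi⟩ := by
      apply Fin.ext; simpa using d2
    rw [hf1, hf2]
    exact bowtie1 _ _ _
  · intro i hi
    have e1 : 2 * i < 2 ^ (k + 2) := by omega
    have e2 : 2 * i + 1 < 2 ^ (k + 2) := by omega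
    have d1 : (2 * i) / 2 = i := by omega
    have d2 : (2 * i + 1) / 2 = i := by omega
    simp only [extend, dif_pos e1, dif_pos e2, dif_pos hi, half]
    have hf1 : (⟨(((⟨2 * i, e1⟩ : Fin (2 ^ (k+2))) : ℕ)) / 2, half_lt k _⟩ : Fin (2 ^ (k + 1))) = ⟨i, hi⟩ := by
      apply Fin.ext; simpa using d1
    have hf2 : (⟨(((⟨2 * i + 1, e2⟩ : Fin (2 ^ (k+2))) : ℕ)) / 2, half_lt k _⟩ : Fin (2 ^ (k + 1))) = ⟨i, hi⟩ := by
      apply Fin.ext; simpa using d2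
    rw [hf1, hf2]
    exact bowtie2 _ _ _
  · intro i hi
    simp only [extend, dif_pos hi]
    exact ind_le_one _
/-- The crossing set whose cardinality is `partWidth`. -/
def crossSet {V : Type} (G : SimpleGraph V) (A : Set V) : Set (V × V) :=
  {p : V × V | p.1 ∈ A ∧ p.2 ∉ A ∧ G.Adj p.1 p.2}

lemma partWidth_eq {V : Type} (G : SimpleGraph V) (A : Set V) :
    partWidth G A = (crossSet G A).ncard := rfl

open Classical in
noncomputable def pairB (k : ℕ) (A : Set (PV (k+1))) (j : Fin (2 ^ (k + 2))) :
    PV (k+1) × PV (k+1) :=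
  if (Sum.inl j : PV (k+1)) ∈ A then
    (Sum.inl j, Sum.inr (Sum.inl (sym k (half k j))))
  else (Sum.inr (Sum.inl (sym k (half k j))), Sum.inl j)

open Classical in
noncomputable def pairC (k : ℕ) (A : Set (PV (k+1))) (j : Fin (2 ^ (k + 2))) :
    PV (k+1) × PV (k+1) :=
  if (Sum.inl j : PV (k+1)) ∈ A then
    (Sum.inl j, Sum.inr (Sum.inr (sym k (half k j))))
  else (Sum.inr (Sum.inr (sym k (half k j))), Sum.inl j)

lemma pairB_inj (k : ℕ) (A : Set (PV (k+1))) : Function.Injective (pairB k A) := by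
  intro j j' h
  unfold pairB at h
  split_ifs at h <;> obtain ⟨h1, h2⟩ := Prod.mk.injEq .. ▸ h
  · exact Fin.ext (congrArg Fin.val (Sum.inl_injective h1))
  · exact nomatch h1
  · exact nomatch h1
  · exact Fin.ext (congrArg Fin.val (Sum.inl_injective h2))

lemma pairC_inj (k : ℕ) (A : Set (PV (k+1))) : Function.Injective (pairC k A) := by
  intro j j' h
  unfold pairC at h
  split_ifs at h <;> obtain ⟨h1, h2⟩ := Prod.mk.injEq .. ▸ h
  · exact Fin.ext (congrArg Fin.val (Sum.inl_injective h1))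
  · exact nomatch h1
  · exact nomatch h1
  · exact Fin.ext (congrArg Fin.val (Sum.inl_injective h2))

lemma pairB_mem (k : ℕ) (A : Set (PV (k+1))) (j : Fin (2 ^ (k + 2)))
    (hj : ¬((Sum.inl j : PV (k+1)) ∈ A ↔ (Sum.inr (Sum.inl (sym k (half k j))) : PV (k+1)) ∈ A)) :
    pairB k A j ∈ crossSet (PG (k+1)) A := by
  unfold pairB
  by_cases h : (Sum.inl j : PV (k+1)) ∈ A
  · rw [if_pos h]
    exact ⟨h, fun hb => hj ⟨fun _ => hb, fun _ => h⟩, adj_ab' k j⟩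
  · rw [if_neg h]
    refine ⟨?_, h, (adj_ab' k j).symm⟩
    by_contra hb
    exact hj ⟨fun hh => absurd hh h, fun hh => absurd hh hb⟩

lemma pairC_mem (k : ℕ) (A : Set (PV (k+1))) (j : Fin (2 ^ (k + 2)))
    (hj : ¬((Sum.inl j : PV (k+1)) ∈ A ↔ (Sum.inr (Sum.inr (sym k (half k j))) : PV (k+1)) ∈ A)) :
    pairC k A j ∈ crossSet (PG (k+1)) A := by
  unfold pairC
  by_cases h : (Sum.inl j : PV (k+1)) ∈ A
  · rw [if_pos h]
    exact ⟨h, fun hb => hj ⟨fun _ => hb, fun _ => h⟩, adj_ac' k j⟩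
  · rw [if_neg h]
    refine ⟨?_, h, (adj_ac' k j).symm⟩
    by_contra hb
    exact hj ⟨fun hh => absurd hh h, fun hh => absurd hh hb⟩

def embBB (k : ℕ) (p : PV k × PV k) : PV (k+1) × PV (k+1) :=
  (Sum.inr (Sum.inl p.1), Sum.inr (Sum.inl p.2))

def embCC (k : ℕ) (p : PV k × PV k) : PV (k+1) × PV (k+1) :=
  (Sum.inr (Sum.inr p.1), Sum.inr (Sum.inr p.2))

lemma embBB_inj (k : ℕ) : Function.Injective (embBB k) := by
  rintro ⟨a, b⟩ ⟨c, d⟩ h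
  obtain ⟨h1, h2⟩ := Prod.mk.injEq .. ▸ h
  exact Prod.ext (Sum.inl_injective (Sum.inr_injective h1))
    (Sum.inl_injective (Sum.inr_injective h2))

lemma embCC_inj (k : ℕ) : Function.Injective (embCC k) := by
  rintro ⟨a, b⟩ ⟨c, d⟩ h
  obtain ⟨h1, h2⟩ := Prod.mk.injEq .. ▸ h
  exact Prod.ext (Sum.inr_injective (Sum.inr_injective h1))
    (Sum.inr_injective (Sum.inr_injective h2))
lemma adj0 (t r : Fin 2) : (PG 0).Adj (Sum.inl t) (Sum.inr r) := by
  rw [PG]; erw [SimpleGraph.fromRel_adj]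
  exact ⟨fun h => (nomatch h), Or.inl ⟨rfl, rfl⟩⟩

open Classical in
noncomputable def pair0 (A : Set (PV 0)) (t r : Fin 2) : PV 0 × PV 0 :=
  if (Sum.inr r : PV 0) ∈ A then ((Sum.inr r : PV 0), Sum.inl (t + 1))
  else ((Sum.inl t : PV 0), Sum.inr r)

lemma pair0_mem (A : Set (PV 0)) (t r : Fin 2) (htA : (Sum.inl t : PV 0) ∈ A)
    (ht' : (Sum.inl (t + 1) : PV 0) ∉ A) : pair0 A t r ∈ crossSet (PG 0) A := by
  unfold pair0
  by_cases h : (Sum.inr r : PV 0) ∈ A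
  · rw [if_pos h]
    exact ⟨h, ht', (adj0 (t + 1) r).symm⟩
  · rw [if_neg h]
    exact ⟨htA, h, adj0 t r⟩

lemma pair0_ne (A : Set (PV 0)) (t : Fin 2) : pair0 A t 0 ≠ pair0 A t 1 := by
  unfold pair0
  split_ifs <;> intro h <;> obtain ⟨h1, h2⟩ := Prod.mk.injEq .. ▸ h
  · exact absurd (Sum.inr_injective h1) (by decide)
  · exact nomatch h1
  · exact nomatch h1
  · exact absurd (Sum.inr_injective h2) (by decide)

lemma base_case (m : ℕ) (hm : m ≤ 2 ^ 0) (A : Set (PV 0))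
    (hA : (A ∩ Set.range (sym 0)).ncard = m) : 2 * m ≤ partWidth (PG 0) A := by
  interval_cases m
  · simp
  · obtain ⟨a, ha⟩ := Set.ncard_eq_one.mp hA
    have hmem : a ∈ A ∩ Set.range (sym 0) := by rw [ha]; rfl
    obtain ⟨ha1, t, rfl⟩ := hmem
    have hne : ∀ s : Fin 2, s + 1 ≠ s := by decide
    have hnotin : sym 0 (t + 1) ∉ A := by
      intro h
      have h2 : sym 0 (t + 1) ∈ A ∩ Set.range (sym 0) := ⟨h, ⟨t + 1, rfl⟩⟩
      rw [ha] at h2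
      exact hne t (sym_inj 0 h2)
    have hsub : ({pair0 A t 0, pair0 A t 1} : Set (PV 0 × PV 0)) ⊆ crossSet (PG 0) A := by
      rintro p (rfl | rfl)
      · exact pair0_mem A t 0 ha1 hnotin
      · exact pair0_mem A t 1 ha1 hnotin
    have h2 : 2 ≤ (crossSet (PG 0) A).ncard := by
      calc 2 = ({pair0 A t 0, pair0 A t 1} : Set (PV 0 × PV 0)).ncard :=
            (Set.ncard_pair (pair0_ne A t)).symm
        _ ≤ (crossSet (PG 0) A).ncard := Set.ncard_le_ncard hsub (Set.toFinite _)
    rw [partWidth_eq]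
    omega
open Classical in
lemma step_case (k : ℕ)
    (ih : ∀ m ≤ 2 ^ k, ∀ A : Set (PV k),
      (A ∩ Set.range (sym k)).ncard = m → 2 * m ≤ partWidth (PG k) A)
    (m : ℕ) (hm : m ≤ 2 ^ (k + 1)) (A : Set (PV (k + 1)))
    (hA : (A ∩ Set.range (sym (k + 1))).ncard = m) :
    2 * m ≤ partWidth (PG (k + 1)) A := by
  classical
  -- the two halves of the lower level
  set Ab : Set (PV k) := {w : PV k | (Sum.inr (Sum.inl w) : PV (k+1)) ∈ A} with hAb
  set Ac : Set (PV k) := {w : PV k | (Sum.inr (Sum.inr w) : PV (k+1)) ∈ A} with hAc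
  -- packaged induction hypothesis
  have minIH : ∀ B : Set (PV k),
      2 * min ((B ∩ Set.range (sym k)).ncard)
          (2 ^ (k + 1) - (B ∩ Set.range (sym k)).ncard) ≤ partWidth (PG k) B := by
    intro B
    rcases le_or_gt ((B ∩ Set.range (sym k)).ncard) (2 ^ k) with h | h
    · calc 2 * min ((B ∩ Set.range (sym k)).ncard)
            (2 ^ (k + 1) - (B ∩ Set.range (sym k)).ncard)
          ≤ 2 * (B ∩ Set.range (sym k)).ncard := Nat.mul_le_mul_left 2 (min_le_left _ _)
        _ ≤ partWidth (PG k) B := ih _ h B rfl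
    · have hle := symbols_le k B
      have hc := ncard_compl_symbols k B
      have h2 : 2 ^ (k + 1) - (B ∩ Set.range (sym k)).ncard ≤ 2 ^ k := by
        have he : (2:ℕ) ^ (k + 1) = 2 * 2 ^ k := by ring
        omega
      have := ih _ h2 Bᶜ hc
      rw [partWidth_compl] at this
      calc 2 * min ((B ∩ Set.range (sym k)).ncard)
            (2 ^ (k + 1) - (B ∩ Set.range (sym k)).ncard)
          ≤ 2 * (2 ^ (k + 1) - (B ∩ Set.range (sym k)).ncard) :=
            Nat.mul_le_mul_left 2 (min_le_right _ _)
        _ ≤ partWidth (PG k) B := this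
  -- the symbol counts as sums of indicators
  have hmsum : (∑ j : Fin (2 ^ (k + 2)), ind ((Sum.inl j : PV (k+1)) ∈ A)) = m := by
    rw [← hA]
    exact (ncard_symbols (k + 1) A).symm
  have hBsum : (Ab ∩ Set.range (sym k)).ncard
      = ∑ i : Fin (2 ^ (k + 1)), ind ((Sum.inr (Sum.inl (sym k i)) : PV (k+1)) ∈ A) :=
    ncard_symbols k Ab
  have hCsum : (Ac ∩ Set.range (sym k)).ncard
      = ∑ i : Fin (2 ^ (k + 1)), ind ((Sum.inr (Sum.inr (sym k i)) : PV (k+1)) ∈ A) :=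
    ncard_symbols k Ac
  -- the two side bounds
  have sideB : m ≤
      (∑ j : Fin (2 ^ (k + 2)), ind (¬(((Sum.inl j : PV (k+1)) ∈ A) ↔
        ((Sum.inr (Sum.inl (sym k (half k j))) : PV (k+1)) ∈ A)))) + partWidth (PG k) Ab := by
    have hcut := minIH Ab
    rw [hBsum] at hcut
    have := side_bound k (partWidth (PG k) Ab)
      (fun j => (Sum.inl j : PV (k+1)) ∈ A)
      (fun i => (Sum.inr (Sum.inl (sym k i)) : PV (k+1)) ∈ A)
      (by rw [hmsum]; exact hm) hcut
    rw [hmsum] at this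
    exact this
  have sideC : m ≤
      (∑ j : Fin (2 ^ (k + 2)), ind (¬(((Sum.inl j : PV (k+1)) ∈ A) ↔
        ((Sum.inr (Sum.inr (sym k (half k j))) : PV (k+1)) ∈ A)))) + partWidth (PG k) Ac := by
    have hcut := minIH Ac
    rw [hCsum] at hcut
    have := side_bound k (partWidth (PG k) Ac)
      (fun j => (Sum.inl j : PV (k+1)) ∈ A)
      (fun i => (Sum.inr (Sum.inr (sym k i)) : PV (k+1)) ∈ A)
      (by rw [hmsum]; exact hm) hcut
    rw [hmsum] at this
    exact this
  -- the four disjoint pieces of the crossing set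
  set SBB := embBB k '' crossSet (PG k) Ab with hSBB
  set SCC := embCC k '' crossSet (PG k) Ac with hSCC
  set SAB := pairB k A '' {j : Fin (2 ^ (k + 2)) | ¬(((Sum.inl j : PV (k+1)) ∈ A) ↔
      ((Sum.inr (Sum.inl (sym k (half k j))) : PV (k+1)) ∈ A))} with hSAB
  set SAC := pairC k A '' {j : Fin (2 ^ (k + 2)) | ¬(((Sum.inl j : PV (k+1)) ∈ A) ↔
      ((Sum.inr (Sum.inr (sym k (half k j))) : PV (k+1)) ∈ A))} with hSAC
  have subBB : SBB ⊆ crossSet (PG (k+1)) A := by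
    rintro _ ⟨⟨a, b⟩, ⟨ha, hb, hadj⟩, rfl⟩
    exact ⟨ha, hb, (adj_bb k a b).mpr hadj⟩
  have subCC : SCC ⊆ crossSet (PG (k+1)) A := by
    rintro _ ⟨⟨a, b⟩, ⟨ha, hb, hadj⟩, rfl⟩
    exact ⟨ha, hb, (adj_cc k a b).mpr hadj⟩
  have subAB : SAB ⊆ crossSet (PG (k+1)) A := by
    rintro _ ⟨j, hj, rfl⟩
    exact pairB_mem k A j hj
  have subAC : SAC ⊆ crossSet (PG (k+1)) A := by
    rintro _ ⟨j, hj, rfl⟩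
    exact pairC_mem k A j hj
  -- cardinalities of the pieces
  have nBB : SBB.ncard = partWidth (PG k) Ab := by
    rw [hSBB, Set.ncard_image_of_injective _ (embBB_inj k)]
    rfl
  have nCC : SCC.ncard = partWidth (PG k) Ac := by
    rw [hSCC, Set.ncard_image_of_injective _ (embCC_inj k)]
    rfl
  have nAB : SAB.ncard = ∑ j : Fin (2 ^ (k + 2)), ind (¬(((Sum.inl j : PV (k+1)) ∈ A) ↔
      ((Sum.inr (Sum.inl (sym k (half k j))) : PV (k+1)) ∈ A))) := by
    rw [hSAB, Set.ncard_image_of_injective _ (pairB_inj k A), ncard_setOf_fin]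
  have nAC : SAC.ncard = ∑ j : Fin (2 ^ (k + 2)), ind (¬(((Sum.inl j : PV (k+1)) ∈ A) ↔
      ((Sum.inr (Sum.inr (sym k (half k j))) : PV (k+1)) ∈ A))) := by
    rw [hSAC, Set.ncard_image_of_injective _ (pairC_inj k A), ncard_setOf_fin]
  -- disjointness
  have dBBAB : Disjoint SBB SAB := by
    rw [Set.disjoint_left]
    rintro _ ⟨⟨a, b⟩, _, rfl⟩ ⟨j, _, hp⟩
    unfold pairB embBB at hp
    split_ifs at hp <;> obtain ⟨h1, h2⟩ := Prod.mk.injEq .. ▸ hp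
    · exact nomatch h1
    · exact nomatch h2
  have dBBAC : Disjoint SBB SAC := by
    rw [Set.disjoint_left]
    rintro _ ⟨⟨a, b⟩, _, rfl⟩ ⟨j, _, hp⟩
    unfold pairC embBB at hp
    split_ifs at hp <;> obtain ⟨h1, h2⟩ := Prod.mk.injEq .. ▸ hp
    · exact nomatch h1
    · exact nomatch h2
  have dCCAB : Disjoint SCC SAB := by
    rw [Set.disjoint_left]
    rintro _ ⟨⟨a, b⟩, _, rfl⟩ ⟨j, _, hp⟩
    unfold pairB embCC at hp
    split_ifs at hp <;> obtain ⟨h1, h2⟩ := Prod.mk.injEq .. ▸ hp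
    · exact nomatch h1
    · exact nomatch h2
  have dCCAC : Disjoint SCC SAC := by
    rw [Set.disjoint_left]
    rintro _ ⟨⟨a, b⟩, _, rfl⟩ ⟨j, _, hp⟩
    unfold pairC embCC at hp
    split_ifs at hp <;> obtain ⟨h1, h2⟩ := Prod.mk.injEq .. ▸ hp
    · exact nomatch h1
    · exact nomatch h2
  have dBBCC : Disjoint SBB SCC := by
    rw [Set.disjoint_left]
    rintro _ ⟨⟨a, b⟩, _, rfl⟩ ⟨⟨c, d⟩, _, hp⟩
    unfold embBB embCC at hp
    obtain ⟨h1, h2⟩ := Prod.mk.injEq .. ▸ hp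
    exact nomatch Sum.inr_injective h1
  have dABAC : Disjoint SAB SAC := by
    rw [Set.disjoint_left]
    rintro _ ⟨j, _, rfl⟩ ⟨j', _, hp⟩
    unfold pairB pairC at hp
    split_ifs at hp <;> obtain ⟨h1, h2⟩ := Prod.mk.injEq .. ▸ hp
    · exact nomatch Sum.inr_injective h2
    · exact nomatch h1
    · exact nomatch h1
    · exact nomatch Sum.inr_injective h1
  -- assembling
  have hU : SBB ∪ SAB ∪ (SCC ∪ SAC) ⊆ crossSet (PG (k+1)) A := by
    refine Set.union_subset (Set.union_subset subBB subAB) (Set.union_subset subCC subAC)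
  have hdisj : Disjoint (SBB ∪ SAB) (SCC ∪ SAC) := by
    rw [Set.disjoint_union_left]
    constructor <;> rw [Set.disjoint_union_right]
    · exact ⟨dBBCC, dBBAC⟩
    · exact ⟨dCCAB.symm, dABAC⟩
  have hcard : (SBB ∪ SAB ∪ (SCC ∪ SAC)).ncard
      = SBB.ncard + SAB.ncard + (SCC.ncard + SAC.ncard) := by
    rw [Set.ncard_union_eq hdisj (Set.toFinite _) (Set.toFinite _),
      Set.ncard_union_eq dBBAB (Set.toFinite _) (Set.toFinite _),
      Set.ncard_union_eq dCCAC (Set.toFinite _) (Set.toFinite _)]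
  rw [partWidth_eq]
  calc 2 * m = m + m := by ring
    _ ≤ ((∑ j : Fin (2 ^ (k + 2)), ind (¬(((Sum.inl j : PV (k+1)) ∈ A) ↔
          ((Sum.inr (Sum.inl (sym k (half k j))) : PV (k+1)) ∈ A)))) + partWidth (PG k) Ab)
        + ((∑ j : Fin (2 ^ (k + 2)), ind (¬(((Sum.inl j : PV (k+1)) ∈ A) ↔
          ((Sum.inr (Sum.inr (sym k (half k j))) : PV (k+1)) ∈ A)))) + partWidth (PG k) Ac) :=
        add_le_add sideB sideC
    _ = (SBB ∪ SAB ∪ (SCC ∪ SAC)).ncard := by rw [hcard, nBB, nCC, nAB, nAC]; ring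
    _ ≤ (crossSet (PG (k+1)) A).ncard := Set.ncard_le_ncard hU (Set.toFinite _)

theorem m_section_aux : ∀ k : ℕ, ∀ m ≤ 2 ^ k, ∀ A : Set (PV k),
    (A ∩ Set.range (sym k)).ncard = m → 2 * m ≤ partWidth (PG k) A := by
  intro k
  induction k with
  | zero => exact base_case
  | succ k ih => exact step_case k ih


/-- For every `n ≥ 1` (written `n = k + 1`) and every `m` with
`0 ≤ m ≤ 2^{n−1} = 2^k`, the `m`-section width of the set of symbol nodes of the
`n`-polar decoding graph `P_n = PG k` is at least `2m`: every partition `(A, Aᶜ)` of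
the vertices with exactly `m` symbol nodes in `A` has at least `2m` crossing edges. -/
theorem m_section_width_polar_decoding_graph (k m : ℕ) (hm : m ≤ 2 ^ k)
    (A : Set (PV k)) (hA : (A ∩ Set.range (sym k)).ncard = m) :
    2 * m ≤ partWidth (PG k) A := by
  exact m_section_aux k m hm A hA
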